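/- The chromatic numbers of the squares of T_{7,7} = C_7 □ C_7 and T_{7,8} = C_7 □ C_8 both equal 7. -/

import Mathlib

set_option synthInstance.maxSize 5000
set_option synthInstance.maxHeartbeats 2000000
set_option maxHeartbeats 4000000

open SimpleGraph

/-- The square of a simple graph `G`: distinct vertices are adjacent iff they are
adjacent in `G` or have a common neighbor in `G` (i.e. are at distance at most 2). -/
def SimpleGraph.square {V : Type*} (G : SimpleGraph V) : SimpleGraph V where
  Adj u v := u ≠ v ∧ (G.Adj u v ∨ ∃ w, G.Adj u w ∧ G.Adj w v)
  symm := ⟨fun u v => by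
    rintro ⟨h, h' | ⟨w, hw1, hw2⟩⟩
    exacts [⟨h.symm, Or.inl h'.symm⟩, ⟨h.symm, Or.inr ⟨w, hw2.symm, hw1.symm⟩⟩]⟩
  loopless := ⟨fun v => by simp⟩

/-- The toroidal grid `T_{m,n} = C_m □ C_n`. -/
def toroidalGrid (m n : ℕ) : SimpleGraph (Fin m × Fin n) :=
  SimpleGraph.cycleGraph m □ SimpleGraph.cycleGraph n

/-- The independence number of a graph: the maximum size of an independent set,
i.e. the clique number of the complement graph. -/
noncomputable def SimpleGraph.indepNum' {V : Type*} (G : SimpleGraph V) : ℕ :=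
  Gᶜ.cliqueNum

/-! ### Decidability instances -/

instance {α β : Type*} [DecidableEq α] [DecidableEq β] {G : SimpleGraph α} {H : SimpleGraph β}
    [DecidableRel G.Adj] [DecidableRel H.Adj] : DecidableRel (G □ H).Adj := fun _ _ =>
  decidable_of_iff' _ SimpleGraph.boxProd_adj

instance (m n : ℕ) : DecidableRel (toroidalGrid m n).Adj := by
  unfold toroidalGrid; infer_instance

instance {V : Type*} [DecidableEq V] [Fintype V] (G : SimpleGraph V) [DecidableRel G.Adj] :
    DecidableRel G.square.Adj := fun u v =>
  inferInstanceAs (Decidable (u ≠ v ∧ (G.Adj u v ∨ ∃ w, G.Adj u w ∧ G.Adj w v)))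

/-! ### Combinatorial predicates on columns -/

def cr1 {n : ℕ} [NeZero n] (a b : Fin n) : Prop := b ≠ a ∧ b ≠ a + 1 ∧ a ≠ b + 1
def innr {n : ℕ} [NeZero n] (a b : Fin n) : Prop :=
  a ≠ b ∧ b ≠ a + 1 ∧ b ≠ a + 2 ∧ a ≠ b + 1 ∧ a ≠ b + 2
instance {n : ℕ} [NeZero n] (a b : Fin n) : Decidable (cr1 a b) := by unfold cr1; infer_instance
instance {n : ℕ} [NeZero n] (a b : Fin n) : Decidable (innr a b) := by unfold innr; infer_instance

/-! ### Element-level lemmas (decided by kernel computation) -/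

theorem no3row7 : ∀ a b c : Fin 7, innr a b → innr a c → innr b c → False := by decide

theorem L22 : ∀ a0 a1 : Fin 7, innr a0 a1 → ∀ b0 b1 : Fin 7, innr b0 b1 →
    cr1 a0 b0 → cr1 a0 b1 → cr1 a1 b0 → cr1 a1 b1 → False := by decide

theorem L121 : ∀ b0 b1 : Fin 7, innr b0 b1 → ∀ a0 : Fin 7, cr1 a0 b0 → cr1 a0 b1 →
    ∀ c0 : Fin 7, cr1 b0 c0 → cr1 b1 c0 → c0 ≠ a0 → False := by decide

theorem L212 : ∀ a0 a1 : Fin 7, innr a0 a1 → ∀ b0 : Fin 7, cr1 a0 b0 → cr1 a1 b0 →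
    ∀ c0 c1 : Fin 7, innr c0 c1 → cr1 b0 c0 → cr1 b0 c1 →
    c0 ≠ a0 → c0 ≠ a1 → c1 ≠ a0 → c1 ≠ a1 → False := by decide

theorem no3row8 : ∀ a b c : Fin 8, innr a b → innr a c → innr b c → False := by decide

theorem L122 : ∀ b0 b1 : Fin 8, innr b0 b1 → ∀ c0 c1 : Fin 8, innr c0 c1 →
    cr1 b0 c0 → cr1 b0 c1 → cr1 b1 c0 → cr1 b1 c1 →
    ∀ a0 : Fin 8, cr1 a0 b0 → cr1 a0 b1 → c0 ≠ a0 → c1 ≠ a0 → False := by decide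

theorem L221 : ∀ a0 a1 : Fin 8, innr a0 a1 → ∀ b0 b1 : Fin 8, innr b0 b1 →
    cr1 a0 b0 → cr1 a0 b1 → cr1 a1 b0 → cr1 a1 b1 →
    ∀ c0 : Fin 8, cr1 b0 c0 → cr1 b1 c0 → c0 ≠ a0 → c0 ≠ a1 → False := by decide

set_option maxRecDepth 100000 in
theorem CYC78 : ∀ a0 a1 : Fin 8, innr a0 a1 →
    ∀ b0 : Fin 8, cr1 a0 b0 → cr1 a1 b0 →
    ∀ c0 c1 : Fin 8, innr c0 c1 → cr1 b0 c0 → cr1 b0 c1 →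
      c0 ≠ a0 → c0 ≠ a1 → c1 ≠ a0 → c1 ≠ a1 →
    ∀ d0 : Fin 8, cr1 c0 d0 → cr1 c1 d0 → d0 ≠ b0 →
    ∀ e0 e1 : Fin 8, innr e0 e1 → cr1 d0 e0 → cr1 d0 e1 →
      e0 ≠ c0 → e0 ≠ c1 → e1 ≠ c0 → e1 ≠ c1 →
    ∀ f0 : Fin 8, cr1 e0 f0 → cr1 e1 f0 → f0 ≠ d0 → a0 ≠ f0 → a1 ≠ f0 →
    ∀ g0 : Fin 8, cr1 f0 g0 → cr1 g0 a0 → cr1 g0 a1 → g0 ≠ e0 → g0 ≠ e1 → b0 ≠ g0 →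
    False := by decide

/-! ### Count-level lemmas -/

set_option maxRecDepth 100000 in
theorem countlem77 : ∀ r0 r1 r2 r3 r4 r5 r6 : Fin 3,
    (¬(r0 = 2 ∧ r1 = 2) ∧ ¬(r1 = 2 ∧ r2 = 2) ∧ ¬(r2 = 2 ∧ r3 = 2) ∧ ¬(r3 = 2 ∧ r4 = 2) ∧ ¬(r4 = 2 ∧ r5 = 2) ∧ ¬(r5 = 2 ∧ r6 = 2) ∧ ¬(r6 = 2 ∧ r0 = 2)) →
    (¬(r0 = 1 ∧ r1 = 2 ∧ r2 = 1) ∧ ¬(r1 = 1 ∧ r2 = 2 ∧ r3 = 1) ∧ ¬(r2 = 1 ∧ r3 = 2 ∧ r4 = 1) ∧ ¬(r3 = 1 ∧ r4 = 2 ∧ r5 = 1) ∧ ¬(r4 = 1 ∧ r5 = 2 ∧ r6 = 1) ∧ ¬(r5 = 1 ∧ r6 = 2 ∧ r0 = 1) ∧ ¬(r6 = 1 ∧ r0 = 2 ∧ r1 = 1)) →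
    (¬(r0 = 2 ∧ r1 = 1 ∧ r2 = 2) ∧ ¬(r1 = 2 ∧ r2 = 1 ∧ r3 = 2) ∧ ¬(r2 = 2 ∧ r3 = 1 ∧ r4 = 2) ∧ ¬(r3 = 2 ∧ r4 = 1 ∧ r5 = 2) ∧ ¬(r4 = 2 ∧ r5 = 1 ∧ r6 = 2) ∧ ¬(r5 = 2 ∧ r6 = 1 ∧ r0 = 2) ∧ ¬(r6 = 2 ∧ r0 = 1 ∧ r1 = 2)) →
    r0.val + r1.val + r2.val + r3.val + r4.val + r5.val + r6.val ≤ 8 := by decide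

set_option maxRecDepth 100000 in
theorem countlem78 : ∀ r0 r1 r2 r3 r4 r5 r6 : Fin 3,
    (¬(r0 ≠ 0 ∧ r1 = 2 ∧ r2 = 2) ∧ ¬(r1 ≠ 0 ∧ r2 = 2 ∧ r3 = 2) ∧ ¬(r2 ≠ 0 ∧ r3 = 2 ∧ r4 = 2) ∧ ¬(r3 ≠ 0 ∧ r4 = 2 ∧ r5 = 2) ∧ ¬(r4 ≠ 0 ∧ r5 = 2 ∧ r6 = 2) ∧ ¬(r5 ≠ 0 ∧ r6 = 2 ∧ r0 = 2) ∧ ¬(r6 ≠ 0 ∧ r0 = 2 ∧ r1 = 2)) →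
    (¬(r0 = 2 ∧ r1 = 2 ∧ r2 ≠ 0) ∧ ¬(r1 = 2 ∧ r2 = 2 ∧ r3 ≠ 0) ∧ ¬(r2 = 2 ∧ r3 = 2 ∧ r4 ≠ 0) ∧ ¬(r3 = 2 ∧ r4 = 2 ∧ r5 ≠ 0) ∧ ¬(r4 = 2 ∧ r5 = 2 ∧ r6 ≠ 0) ∧ ¬(r5 = 2 ∧ r6 = 2 ∧ r0 ≠ 0) ∧ ¬(r6 = 2 ∧ r0 = 2 ∧ r1 ≠ 0)) →
    10 ≤ r0.val + r1.val + r2.val + r3.val + r4.val + r5.val + r6.val →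
    (r0 = 2 ∧ r1 = 1 ∧ r2 = 2 ∧ r3 = 1 ∧ r4 = 2 ∧ r5 = 1 ∧ r6 = 1) ∨ (r1 = 2 ∧ r2 = 1 ∧ r3 = 2 ∧ r4 = 1 ∧ r5 = 2 ∧ r6 = 1 ∧ r0 = 1) ∨ (r2 = 2 ∧ r3 = 1 ∧ r4 = 2 ∧ r5 = 1 ∧ r6 = 2 ∧ r0 = 1 ∧ r1 = 1) ∨ (r3 = 2 ∧ r4 = 1 ∧ r5 = 2 ∧ r6 = 1 ∧ r0 = 2 ∧ r1 = 1 ∧ r2 = 1) ∨ (r4 = 2 ∧ r5 = 1 ∧ r6 = 2 ∧ r0 = 1 ∧ r1 = 2 ∧ r2 = 1 ∧ r3 = 1) ∨ (r5 = 2 ∧ r6 = 1 ∧ r0 = 2 ∧ r1 = 1 ∧ r2 = 2 ∧ r3 = 1 ∧ r4 = 1) ∨ (r6 = 2 ∧ r0 = 1 ∧ r1 = 2 ∧ r2 = 1 ∧ r3 = 2 ∧ r4 = 1 ∧ r5 = 1) := by decide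

theorem brA1_7 : ∀ (i : Fin 7) (a : Fin 7), (toroidalGrid 7 7).square.Adj (i,a) (i,a+1) := by decide
theorem brA2_7 : ∀ (i : Fin 7) (a : Fin 7), (toroidalGrid 7 7).square.Adj (i,a) (i,a+2) := by decide
theorem brA3_7 : ∀ (i : Fin 7) (a : Fin 7), (toroidalGrid 7 7).square.Adj (i,a) (i+1,a) := by decide
theorem brA4_7 : ∀ (i : Fin 7) (a : Fin 7), (toroidalGrid 7 7).square.Adj (i,a) (i+2,a) := by decide
theorem brA5_7 : ∀ (i : Fin 7) (a : Fin 7), (toroidalGrid 7 7).square.Adj (i,a) (i+1,a+1) := by decide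
theorem brA6_7 : ∀ (i : Fin 7) (a : Fin 7), (toroidalGrid 7 7).square.Adj (i,a+1) (i+1,a) := by decide

theorem brA1_8 : ∀ (i : Fin 7) (a : Fin 8), (toroidalGrid 7 8).square.Adj (i,a) (i,a+1) := by decide
theorem brA2_8 : ∀ (i : Fin 7) (a : Fin 8), (toroidalGrid 7 8).square.Adj (i,a) (i,a+2) := by decide
theorem brA3_8 : ∀ (i : Fin 7) (a : Fin 8), (toroidalGrid 7 8).square.Adj (i,a) (i+1,a) := by decide
theorem brA4_8 : ∀ (i : Fin 7) (a : Fin 8), (toroidalGrid 7 8).square.Adj (i,a) (i+2,a) := by decide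
theorem brA5_8 : ∀ (i : Fin 7) (a : Fin 8), (toroidalGrid 7 8).square.Adj (i,a) (i+1,a+1) := by decide
theorem brA6_8 : ∀ (i : Fin 7) (a : Fin 8), (toroidalGrid 7 8).square.Adj (i,a+1) (i+1,a) := by decide

/-! ### Row-decomposition lemmas -/

lemma card_le_two_of_innr {n : ℕ} [NeZero n]
    (no3 : ∀ a b c : Fin n, innr a b → innr a c → innr b c → False)
    (P : Finset (Fin n)) (hIn : ∀ a ∈ P, ∀ b ∈ P, a ≠ b → innr a b) : P.card ≤ 2 := by
  by_contra hgt
  push_neg at hgt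
  obtain ⟨t, ht, hcard⟩ := Finset.exists_subset_card_eq hgt
  obtain ⟨a, b, c, hab, hac, hbc, rfl⟩ := Finset.card_eq_three.mp hcard
  have ha := ht (Finset.mem_insert_self a {b, c})
  have hb := ht (Finset.mem_insert_of_mem (Finset.mem_insert_self b {c}))
  have hc := ht (Finset.mem_insert_of_mem (Finset.mem_insert_of_mem (Finset.mem_singleton_self c)))
  exact no3 a b c (hIn a ha b hb hab) (hIn a ha c hc hac) (hIn b hb c hc hbc)

lemma comb77 (q : Fin 7 → Finset (Fin 7))
    (hRow : ∀ i, ∀ a ∈ q i, ∀ b ∈ q i, b ≠ a + 1 ∧ b ≠ a + 2)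
    (hAdj : ∀ i, ∀ a ∈ q i, ∀ b ∈ q (i+1), cr1 a b)
    (hTwo : ∀ i, ∀ a ∈ q i, ∀ b ∈ q (i+2), b ≠ a) :
    ∑ i, (q i).card ≤ 8 := by
  have hIn : ∀ i, ∀ a ∈ q i, ∀ b ∈ q i, a ≠ b → innr a b := fun i a ha b hb hne =>
    ⟨hne, (hRow i a ha b hb).1, (hRow i a ha b hb).2,
      (hRow i b hb a ha).1, (hRow i b hb a ha).2⟩
  have hle : ∀ i, (q i).card ≤ 2 := fun i =>
    card_le_two_of_innr no3row7 (q i) (hIn i)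
  have eidx : ∀ i : Fin 7, i + 1 + 1 = i + 2 := by decide
  have E1 : ∀ i, ¬((q i).card = 2 ∧ (q (i+1)).card = 2) := by
    rintro i ⟨h1, h2⟩
    obtain ⟨a0, a1, ha, hA⟩ := Finset.card_eq_two.mp h1
    obtain ⟨b0, b1, hb, hB⟩ := Finset.card_eq_two.mp h2
    have ma0 : a0 ∈ q i := hA ▸ Finset.mem_insert_self _ _
    have ma1 : a1 ∈ q i := hA ▸ Finset.mem_insert_of_mem (Finset.mem_singleton_self _)
    have mb0 : b0 ∈ q (i+1) := hB ▸ Finset.mem_insert_self _ _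
    have mb1 : b1 ∈ q (i+1) := hB ▸ Finset.mem_insert_of_mem (Finset.mem_singleton_self _)
    exact L22 a0 a1 (hIn i a0 ma0 a1 ma1 ha) b0 b1 (hIn (i+1) b0 mb0 b1 mb1 hb)
      (hAdj i a0 ma0 b0 mb0) (hAdj i a0 ma0 b1 mb1)
      (hAdj i a1 ma1 b0 mb0) (hAdj i a1 ma1 b1 mb1)
  have E2 : ∀ i, ¬((q i).card = 1 ∧ (q (i+1)).card = 2 ∧ (q (i+2)).card = 1) := by
    rintro i ⟨h1, h2, h3⟩
    obtain ⟨a0, hA⟩ := Finset.card_eq_one.mp h1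
    obtain ⟨b0, b1, hb, hB⟩ := Finset.card_eq_two.mp h2
    obtain ⟨c0, hC⟩ := Finset.card_eq_one.mp h3
    have ma0 : a0 ∈ q i := hA ▸ Finset.mem_singleton_self _
    have mb0 : b0 ∈ q (i+1) := hB ▸ Finset.mem_insert_self _ _
    have mb1 : b1 ∈ q (i+1) := hB ▸ Finset.mem_insert_of_mem (Finset.mem_singleton_self _)
    have mc0 : c0 ∈ q (i+2) := hC ▸ Finset.mem_singleton_self _
    have mc0' : c0 ∈ q (i+1+1) := by rw [eidx]; exact mc0
    exact L121 b0 b1 (hIn (i+1) b0 mb0 b1 mb1 hb) a0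
      (hAdj i a0 ma0 b0 mb0) (hAdj i a0 ma0 b1 mb1)
      c0 (hAdj (i+1) b0 mb0 c0 mc0') (hAdj (i+1) b1 mb1 c0 mc0')
      (hTwo i a0 ma0 c0 mc0)
  have E3 : ∀ i, ¬((q i).card = 2 ∧ (q (i+1)).card = 1 ∧ (q (i+2)).card = 2) := by
    rintro i ⟨h1, h2, h3⟩
    obtain ⟨a0, a1, ha, hA⟩ := Finset.card_eq_two.mp h1
    obtain ⟨b0, hB⟩ := Finset.card_eq_one.mp h2
    obtain ⟨c0, c1, hc, hC⟩ := Finset.card_eq_two.mp h3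
    have ma0 : a0 ∈ q i := hA ▸ Finset.mem_insert_self _ _
    have ma1 : a1 ∈ q i := hA ▸ Finset.mem_insert_of_mem (Finset.mem_singleton_self _)
    have mb0 : b0 ∈ q (i+1) := hB ▸ Finset.mem_singleton_self _
    have mc0 : c0 ∈ q (i+2) := hC ▸ Finset.mem_insert_self _ _
    have mc1 : c1 ∈ q (i+2) := hC ▸ Finset.mem_insert_of_mem (Finset.mem_singleton_self _)
    have mc0' : c0 ∈ q (i+1+1) := by rw [eidx]; exact mc0
    have mc1' : c1 ∈ q (i+1+1) := by rw [eidx]; exact mc1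
    exact L212 a0 a1 (hIn i a0 ma0 a1 ma1 ha) b0
      (hAdj i a0 ma0 b0 mb0) (hAdj i a1 ma1 b0 mb0)
      c0 c1 (hIn (i+2) c0 mc0 c1 mc1 hc)
      (hAdj (i+1) b0 mb0 c0 mc0') (hAdj (i+1) b0 mb0 c1 mc1')
      (hTwo i a0 ma0 c0 mc0) (hTwo i a1 ma1 c0 mc0)
      (hTwo i a0 ma0 c1 mc1) (hTwo i a1 ma1 c1 mc1)
  set r : Fin 7 → Fin 3 := fun i => ⟨(q i).card, Nat.lt_succ_of_le (hle i)⟩ with hr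
  have hv2 : ∀ i, r i = 2 ↔ (q i).card = 2 := fun i => by simp [hr, Fin.ext_iff]
  have hv1 : ∀ i, r i = 1 ↔ (q i).card = 1 := fun i => by simp [hr, Fin.ext_iff]
  rw [Fin.sum_univ_seven]
  have eA0 : (0 : Fin 7) + 1 = 1 := by decide
  have eB0 : (0 : Fin 7) + 2 = 2 := by decide
  have eA1 : (1 : Fin 7) + 1 = 2 := by decide
  have eB1 : (1 : Fin 7) + 2 = 3 := by decide
  have eA2 : (2 : Fin 7) + 1 = 3 := by decide
  have eB2 : (2 : Fin 7) + 2 = 4 := by decide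
  have eA3 : (3 : Fin 7) + 1 = 4 := by decide
  have eB3 : (3 : Fin 7) + 2 = 5 := by decide
  have eA4 : (4 : Fin 7) + 1 = 5 := by decide
  have eB4 : (4 : Fin 7) + 2 = 6 := by decide
  have eA5 : (5 : Fin 7) + 1 = 6 := by decide
  have eB5 : (5 : Fin 7) + 2 = 0 := by decide
  have eA6 : (6 : Fin 7) + 1 = 0 := by decide
  have eB6 : (6 : Fin 7) + 2 = 1 := by decide
  have F1_0 := E1 (0 : Fin 7)
  rw [eA0] at F1_0
  have F1_1 := E1 (1 : Fin 7)
  rw [eA1] at F1_1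
  have F1_2 := E1 (2 : Fin 7)
  rw [eA2] at F1_2
  have F1_3 := E1 (3 : Fin 7)
  rw [eA3] at F1_3
  have F1_4 := E1 (4 : Fin 7)
  rw [eA4] at F1_4
  have F1_5 := E1 (5 : Fin 7)
  rw [eA5] at F1_5
  have F1_6 := E1 (6 : Fin 7)
  rw [eA6] at F1_6
  have F2_0 := E2 (0 : Fin 7)
  rw [eA0] at F2_0
  rw [eB0] at F2_0
  have F2_1 := E2 (1 : Fin 7)
  rw [eA1] at F2_1
  rw [eB1] at F2_1
  have F2_2 := E2 (2 : Fin 7)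
  rw [eA2] at F2_2
  rw [eB2] at F2_2
  have F2_3 := E2 (3 : Fin 7)
  rw [eA3] at F2_3
  rw [eB3] at F2_3
  have F2_4 := E2 (4 : Fin 7)
  rw [eA4] at F2_4
  rw [eB4] at F2_4
  have F2_5 := E2 (5 : Fin 7)
  rw [eA5] at F2_5
  rw [eB5] at F2_5
  have F2_6 := E2 (6 : Fin 7)
  rw [eA6] at F2_6
  rw [eB6] at F2_6
  have F3_0 := E3 (0 : Fin 7)
  rw [eA0] at F3_0
  rw [eB0] at F3_0
  have F3_1 := E3 (1 : Fin 7)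
  rw [eA1] at F3_1
  rw [eB1] at F3_1
  have F3_2 := E3 (2 : Fin 7)
  rw [eA2] at F3_2
  rw [eB2] at F3_2
  have F3_3 := E3 (3 : Fin 7)
  rw [eA3] at F3_3
  rw [eB3] at F3_3
  have F3_4 := E3 (4 : Fin 7)
  rw [eA4] at F3_4
  rw [eB4] at F3_4
  have F3_5 := E3 (5 : Fin 7)
  rw [eA5] at F3_5
  rw [eB5] at F3_5
  have F3_6 := E3 (6 : Fin 7)
  rw [eA6] at F3_6
  rw [eB6] at F3_6
  exact countlem77 (r 0) (r 1) (r 2) (r 3) (r 4) (r 5) (r 6)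
    ⟨fun h => F1_0 ⟨(hv2 0).mp h.1, (hv2 1).mp h.2⟩, fun h => F1_1 ⟨(hv2 1).mp h.1, (hv2 2).mp h.2⟩, fun h => F1_2 ⟨(hv2 2).mp h.1, (hv2 3).mp h.2⟩, fun h => F1_3 ⟨(hv2 3).mp h.1, (hv2 4).mp h.2⟩, fun h => F1_4 ⟨(hv2 4).mp h.1, (hv2 5).mp h.2⟩, fun h => F1_5 ⟨(hv2 5).mp h.1, (hv2 6).mp h.2⟩, fun h => F1_6 ⟨(hv2 6).mp h.1, (hv2 0).mp h.2⟩⟩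
    ⟨fun h => F2_0 ⟨(hv1 0).mp h.1, (hv2 1).mp h.2.1, (hv1 2).mp h.2.2⟩, fun h => F2_1 ⟨(hv1 1).mp h.1, (hv2 2).mp h.2.1, (hv1 3).mp h.2.2⟩, fun h => F2_2 ⟨(hv1 2).mp h.1, (hv2 3).mp h.2.1, (hv1 4).mp h.2.2⟩, fun h => F2_3 ⟨(hv1 3).mp h.1, (hv2 4).mp h.2.1, (hv1 5).mp h.2.2⟩, fun h => F2_4 ⟨(hv1 4).mp h.1, (hv2 5).mp h.2.1, (hv1 6).mp h.2.2⟩, fun h => F2_5 ⟨(hv1 5).mp h.1, (hv2 6).mp h.2.1, (hv1 0).mp h.2.2⟩, fun h => F2_6 ⟨(hv1 6).mp h.1, (hv2 0).mp h.2.1, (hv1 1).mp h.2.2⟩⟩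
    ⟨fun h => F3_0 ⟨(hv2 0).mp h.1, (hv1 1).mp h.2.1, (hv2 2).mp h.2.2⟩, fun h => F3_1 ⟨(hv2 1).mp h.1, (hv1 2).mp h.2.1, (hv2 3).mp h.2.2⟩, fun h => F3_2 ⟨(hv2 2).mp h.1, (hv1 3).mp h.2.1, (hv2 4).mp h.2.2⟩, fun h => F3_3 ⟨(hv2 3).mp h.1, (hv1 4).mp h.2.1, (hv2 5).mp h.2.2⟩, fun h => F3_4 ⟨(hv2 4).mp h.1, (hv1 5).mp h.2.1, (hv2 6).mp h.2.2⟩, fun h => F3_5 ⟨(hv2 5).mp h.1, (hv1 6).mp h.2.1, (hv2 0).mp h.2.2⟩, fun h => F3_6 ⟨(hv2 6).mp h.1, (hv1 0).mp h.2.1, (hv2 1).mp h.2.2⟩⟩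

lemma comb78base (q : Fin 7 → Finset (Fin 8))
    (hRow : ∀ i, ∀ a ∈ q i, ∀ b ∈ q i, b ≠ a + 1 ∧ b ≠ a + 2)
    (hAdj : ∀ i, ∀ a ∈ q i, ∀ b ∈ q (i+1), cr1 a b)
    (hTwo : ∀ i, ∀ a ∈ q i, ∀ b ∈ q (i+2), b ≠ a)
    (h0 : (q 0).card = 2) (h1 : (q 1).card = 1) (h2 : (q 2).card = 2)
    (h3 : (q 3).card = 1) (h4 : (q 4).card = 2) (h5 : (q 5).card = 1)
    (h6 : (q 6).card = 1) : False := by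
  have hIn : ∀ i, ∀ a ∈ q i, ∀ b ∈ q i, a ≠ b → innr a b := fun i a ha b hb hne =>
    ⟨hne, (hRow i a ha b hb).1, (hRow i a ha b hb).2,
      (hRow i b hb a ha).1, (hRow i b hb a ha).2⟩
  obtain ⟨a0, a1, hane, hA⟩ := Finset.card_eq_two.mp h0
  obtain ⟨b0, hB⟩ := Finset.card_eq_one.mp h1
  obtain ⟨c0, c1, hcne, hC⟩ := Finset.card_eq_two.mp h2
  obtain ⟨d0, hD⟩ := Finset.card_eq_one.mp h3
  obtain ⟨e0, e1, hene, hE⟩ := Finset.card_eq_two.mp h4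
  obtain ⟨f0, hF⟩ := Finset.card_eq_one.mp h5
  obtain ⟨g0, hG⟩ := Finset.card_eq_one.mp h6
  have ma0 : a0 ∈ q 0 := hA ▸ Finset.mem_insert_self _ _
  have ma1 : a1 ∈ q 0 := hA ▸ Finset.mem_insert_of_mem (Finset.mem_singleton_self _)
  have mb0 : b0 ∈ q 1 := hB ▸ Finset.mem_singleton_self _
  have mc0 : c0 ∈ q 2 := hC ▸ Finset.mem_insert_self _ _
  have mc1 : c1 ∈ q 2 := hC ▸ Finset.mem_insert_of_mem (Finset.mem_singleton_self _)
  have md0 : d0 ∈ q 3 := hD ▸ Finset.mem_singleton_self _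
  have me0 : e0 ∈ q 4 := hE ▸ Finset.mem_insert_self _ _
  have me1 : e1 ∈ q 4 := hE ▸ Finset.mem_insert_of_mem (Finset.mem_singleton_self _)
  have mf0 : f0 ∈ q 5 := hF ▸ Finset.mem_singleton_self _
  have mg0 : g0 ∈ q 6 := hG ▸ Finset.mem_singleton_self _
  have eA0 : (0 : Fin 7) + 1 = 1 := by decide
  have eB0 : (0 : Fin 7) + 2 = 2 := by decide
  have eA1 : (1 : Fin 7) + 1 = 2 := by decide
  have eB1 : (1 : Fin 7) + 2 = 3 := by decide
  have eA2 : (2 : Fin 7) + 1 = 3 := by decide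
  have eB2 : (2 : Fin 7) + 2 = 4 := by decide
  have eA3 : (3 : Fin 7) + 1 = 4 := by decide
  have eB3 : (3 : Fin 7) + 2 = 5 := by decide
  have eA4 : (4 : Fin 7) + 1 = 5 := by decide
  have eB4 : (4 : Fin 7) + 2 = 6 := by decide
  have eA5 : (5 : Fin 7) + 1 = 6 := by decide
  have eB5 : (5 : Fin 7) + 2 = 0 := by decide
  have eA6 : (6 : Fin 7) + 1 = 0 := by decide
  have eB6 : (6 : Fin 7) + 2 = 1 := by decide
  exact CYC78 a0 a1 (hIn 0 a0 ma0 a1 ma1 hane)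
    b0 (hAdj 0 a0 ma0 b0 (by rw [eA0]; exact mb0)) (hAdj 0 a1 ma1 b0 (by rw [eA0]; exact mb0))
    c0 c1 (hIn 2 c0 mc0 c1 mc1 hcne) (hAdj 1 b0 mb0 c0 (by rw [eA1]; exact mc0)) (hAdj 1 b0 mb0 c1 (by rw [eA1]; exact mc1))
      (hTwo 0 a0 ma0 c0 (by rw [eB0]; exact mc0)) (hTwo 0 a1 ma1 c0 (by rw [eB0]; exact mc0)) (hTwo 0 a0 ma0 c1 (by rw [eB0]; exact mc1)) (hTwo 0 a1 ma1 c1 (by rw [eB0]; exact mc1))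
    d0 (hAdj 2 c0 mc0 d0 (by rw [eA2]; exact md0)) (hAdj 2 c1 mc1 d0 (by rw [eA2]; exact md0)) (hTwo 1 b0 mb0 d0 (by rw [eB1]; exact md0))
    e0 e1 (hIn 4 e0 me0 e1 me1 hene) (hAdj 3 d0 md0 e0 (by rw [eA3]; exact me0)) (hAdj 3 d0 md0 e1 (by rw [eA3]; exact me1))
      (hTwo 2 c0 mc0 e0 (by rw [eB2]; exact me0)) (hTwo 2 c1 mc1 e0 (by rw [eB2]; exact me0)) (hTwo 2 c0 mc0 e1 (by rw [eB2]; exact me1)) (hTwo 2 c1 mc1 e1 (by rw [eB2]; exact me1))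
    f0 (hAdj 4 e0 me0 f0 (by rw [eA4]; exact mf0)) (hAdj 4 e1 me1 f0 (by rw [eA4]; exact mf0)) (hTwo 3 d0 md0 f0 (by rw [eB3]; exact mf0))
      (hTwo 5 f0 mf0 a0 (by rw [eB5]; exact ma0)) (hTwo 5 f0 mf0 a1 (by rw [eB5]; exact ma1))
    g0 (hAdj 5 f0 mf0 g0 (by rw [eA5]; exact mg0)) (hAdj 6 g0 mg0 a0 (by rw [eA6]; exact ma0)) (hAdj 6 g0 mg0 a1 (by rw [eA6]; exact ma1))
      (hTwo 4 e0 me0 g0 (by rw [eB4]; exact mg0)) (hTwo 4 e1 me1 g0 (by rw [eB4]; exact mg0)) (hTwo 6 g0 mg0 b0 (by rw [eB6]; exact mb0))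


lemma comb78 (q : Fin 7 → Finset (Fin 8))
    (hRow : ∀ i, ∀ a ∈ q i, ∀ b ∈ q i, b ≠ a + 1 ∧ b ≠ a + 2)
    (hAdj : ∀ i, ∀ a ∈ q i, ∀ b ∈ q (i+1), cr1 a b)
    (hTwo : ∀ i, ∀ a ∈ q i, ∀ b ∈ q (i+2), b ≠ a) :
    ∑ i, (q i).card ≤ 9 := by
  by_contra hgt
  push_neg at hgt
  rw [Fin.sum_univ_seven] at hgt
  have hIn : ∀ i, ∀ a ∈ q i, ∀ b ∈ q i, a ≠ b → innr a b := fun i a ha b hb hne =>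
    ⟨hne, (hRow i a ha b hb).1, (hRow i a ha b hb).2,
      (hRow i b hb a ha).1, (hRow i b hb a ha).2⟩
  have hle : ∀ i, (q i).card ≤ 2 := fun i =>
    card_le_two_of_innr no3row8 (q i) (hIn i)
  have eidx : ∀ i : Fin 7, i + 1 + 1 = i + 2 := by decide
  have E1 : ∀ i, ¬((q i).card ≠ 0 ∧ (q (i+1)).card = 2 ∧ (q (i+2)).card = 2) := by
    rintro i ⟨h1, h2, h3⟩
    obtain ⟨a0, ma0⟩ := Finset.card_ne_zero.mp h1
    obtain ⟨b0, b1, hbne, hB⟩ := Finset.card_eq_two.mp h2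
    obtain ⟨c0, c1, hcne, hC⟩ := Finset.card_eq_two.mp h3
    have mb0 : b0 ∈ q (i+1) := hB ▸ Finset.mem_insert_self _ _
    have mb1 : b1 ∈ q (i+1) := hB ▸ Finset.mem_insert_of_mem (Finset.mem_singleton_self _)
    have mc0 : c0 ∈ q (i+2) := hC ▸ Finset.mem_insert_self _ _
    have mc1 : c1 ∈ q (i+2) := hC ▸ Finset.mem_insert_of_mem (Finset.mem_singleton_self _)
    have mc0' : c0 ∈ q (i+1+1) := by rw [eidx]; exact mc0
    have mc1' : c1 ∈ q (i+1+1) := by rw [eidx]; exact mc1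
    exact L122 b0 b1 (hIn (i+1) b0 mb0 b1 mb1 hbne) c0 c1 (hIn (i+2) c0 mc0 c1 mc1 hcne)
      (hAdj (i+1) b0 mb0 c0 mc0') (hAdj (i+1) b0 mb0 c1 mc1')
      (hAdj (i+1) b1 mb1 c0 mc0') (hAdj (i+1) b1 mb1 c1 mc1')
      a0 (hAdj i a0 ma0 b0 mb0) (hAdj i a0 ma0 b1 mb1)
      (hTwo i a0 ma0 c0 mc0) (hTwo i a0 ma0 c1 mc1)
  have E2 : ∀ i, ¬((q i).card = 2 ∧ (q (i+1)).card = 2 ∧ (q (i+2)).card ≠ 0) := by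
    rintro i ⟨h1, h2, h3⟩
    obtain ⟨a0, a1, hane, hA⟩ := Finset.card_eq_two.mp h1
    obtain ⟨b0, b1, hbne, hB⟩ := Finset.card_eq_two.mp h2
    obtain ⟨c0, mc0⟩ := Finset.card_ne_zero.mp h3
    have ma0 : a0 ∈ q i := hA ▸ Finset.mem_insert_self _ _
    have ma1 : a1 ∈ q i := hA ▸ Finset.mem_insert_of_mem (Finset.mem_singleton_self _)
    have mb0 : b0 ∈ q (i+1) := hB ▸ Finset.mem_insert_self _ _
    have mb1 : b1 ∈ q (i+1) := hB ▸ Finset.mem_insert_of_mem (Finset.mem_singleton_self _)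
    have mc0' : c0 ∈ q (i+1+1) := by rw [eidx]; exact mc0
    exact L221 a0 a1 (hIn i a0 ma0 a1 ma1 hane) b0 b1 (hIn (i+1) b0 mb0 b1 mb1 hbne)
      (hAdj i a0 ma0 b0 mb0) (hAdj i a0 ma0 b1 mb1)
      (hAdj i a1 ma1 b0 mb0) (hAdj i a1 ma1 b1 mb1)
      c0 (hAdj (i+1) b0 mb0 c0 mc0') (hAdj (i+1) b1 mb1 c0 mc0')
      (hTwo i a0 ma0 c0 mc0) (hTwo i a1 ma1 c0 mc0)
  set r : Fin 7 → Fin 3 := fun i => ⟨(q i).card, Nat.lt_succ_of_le (hle i)⟩ with hr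
  have hv2 : ∀ i, r i = 2 ↔ (q i).card = 2 := fun i => by simp [hr, Fin.ext_iff]
  have hv1 : ∀ i, r i = 1 ↔ (q i).card = 1 := fun i => by simp [hr, Fin.ext_iff]
  have hv0 : ∀ i, r i ≠ 0 ↔ (q i).card ≠ 0 := fun i => by simp [hr, Fin.ext_iff]
  have eA0 : (0 : Fin 7) + 1 = 1 := by decide
  have eB0 : (0 : Fin 7) + 2 = 2 := by decide
  have eA1 : (1 : Fin 7) + 1 = 2 := by decide
  have eB1 : (1 : Fin 7) + 2 = 3 := by decide
  have eA2 : (2 : Fin 7) + 1 = 3 := by decide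
  have eB2 : (2 : Fin 7) + 2 = 4 := by decide
  have eA3 : (3 : Fin 7) + 1 = 4 := by decide
  have eB3 : (3 : Fin 7) + 2 = 5 := by decide
  have eA4 : (4 : Fin 7) + 1 = 5 := by decide
  have eB4 : (4 : Fin 7) + 2 = 6 := by decide
  have eA5 : (5 : Fin 7) + 1 = 6 := by decide
  have eB5 : (5 : Fin 7) + 2 = 0 := by decide
  have eA6 : (6 : Fin 7) + 1 = 0 := by decide
  have eB6 : (6 : Fin 7) + 2 = 1 := by decide
  have F1_0 := E1 (0 : Fin 7)
  rw [eA0, eB0] at F1_0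
  have F1_1 := E1 (1 : Fin 7)
  rw [eA1, eB1] at F1_1
  have F1_2 := E1 (2 : Fin 7)
  rw [eA2, eB2] at F1_2
  have F1_3 := E1 (3 : Fin 7)
  rw [eA3, eB3] at F1_3
  have F1_4 := E1 (4 : Fin 7)
  rw [eA4, eB4] at F1_4
  have F1_5 := E1 (5 : Fin 7)
  rw [eA5, eB5] at F1_5
  have F1_6 := E1 (6 : Fin 7)
  rw [eA6, eB6] at F1_6
  have F2_0 := E2 (0 : Fin 7)
  rw [eA0, eB0] at F2_0
  have F2_1 := E2 (1 : Fin 7)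
  rw [eA1, eB1] at F2_1
  have F2_2 := E2 (2 : Fin 7)
  rw [eA2, eB2] at F2_2
  have F2_3 := E2 (3 : Fin 7)
  rw [eA3, eB3] at F2_3
  have F2_4 := E2 (4 : Fin 7)
  rw [eA4, eB4] at F2_4
  have F2_5 := E2 (5 : Fin 7)
  rw [eA5, eB5] at F2_5
  have F2_6 := E2 (6 : Fin 7)
  rw [eA6, eB6] at F2_6
  have hdis := countlem78 (r 0) (r 1) (r 2) (r 3) (r 4) (r 5) (r 6)
    ⟨fun h => F1_0 ⟨(hv0 0).mp h.1, (hv2 1).mp h.2.1, (hv2 2).mp h.2.2⟩, fun h => F1_1 ⟨(hv0 1).mp h.1, (hv2 2).mp h.2.1, (hv2 3).mp h.2.2⟩, fun h => F1_2 ⟨(hv0 2).mp h.1, (hv2 3).mp h.2.1, (hv2 4).mp h.2.2⟩, fun h => F1_3 ⟨(hv0 3).mp h.1, (hv2 4).mp h.2.1, (hv2 5).mp h.2.2⟩, fun h => F1_4 ⟨(hv0 4).mp h.1, (hv2 5).mp h.2.1, (hv2 6).mp h.2.2⟩, fun h => F1_5 ⟨(hv0 5).mp h.1, (hv2 6).mp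 h.2.1, (hv2 0).mp h.2.2⟩, fun h => F1_6 ⟨(hv0 6).mp h.1, (hv2 0).mp h.2.1, (hv2 1).mp h.2.2⟩⟩
    ⟨fun h => F2_0 ⟨(hv2 0).mp h.1, (hv2 1).mp h.2.1, (hv0 2).mp h.2.2⟩, fun h => F2_1 ⟨(hv2 1).mp h.1, (hv2 2).mp h.2.1, (hv0 3).mp h.2.2⟩, fun h => F2_2 ⟨(hv2 2).mp h.1, (hv2 3).mp h.2.1, (hv0 4).mp h.2.2⟩, fun h => F2_3 ⟨(hv2 3).mp h.1, (hv2 4).mp h.2.1, (hv0 5).mp h.2.2⟩, fun h => F2_4 ⟨(hv2 4).mp h.1, (hv2 5).mp h.2.1, (hv0 6).mp h.2.2⟩, fun h => F2_5 ⟨(hv2 5).mp h.1, (hv2 6).mp h.2.1, (hv0 0).mp h.2.2⟩, fun h => F2_6 ⟨(hv2 6).mp h.1, (hv2 0).mp h.2.1, (hv0 1).mp h.2.2⟩⟩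
    hgt
  rcases hdis with h0 | h1 | h2 | h3 | h4 | h5 | h6
  · obtain ⟨k0, k1, k2, k3, k4, k5, k6⟩ := h0
    refine comb78base (fun i => q (i + 0)) ?_ ?_ ?_ ?_ ?_ ?_ ?_ ?_ ?_ ?_
    · intro i; exact hRow (i + 0)
    · intro i a ha b hb; exact hAdj (i + 0) a ha b (by have hb2 : b ∈ q (i + 1 + 0) := hb; rwa [add_right_comm] at hb2)
    · intro i a ha b hb; exact hTwo (i + 0) a ha b (by have hb2 : b ∈ q (i + 2 + 0) := hb; rwa [add_right_comm] at hb2)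
    · show (q ((0 : Fin 7) + 0)).card = 2
      rw [show ((0 : Fin 7) + 0) = 0 from by decide]
      exact (hv2 0).mp k0
    · show (q ((1 : Fin 7) + 0)).card = 1
      rw [show ((1 : Fin 7) + 0) = 1 from by decide]
      exact (hv1 1).mp k1
    · show (q ((2 : Fin 7) + 0)).card = 2
      rw [show ((2 : Fin 7) + 0) = 2 from by decide]
      exact (hv2 2).mp k2
    · show (q ((3 : Fin 7) + 0)).card = 1
      rw [show ((3 : Fin 7) + 0) = 3 from by decide]
      exact (hv1 3).mp k3
    · show (q ((4 : Fin 7) + 0)).card = 2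
      rw [show ((4 : Fin 7) + 0) = 4 from by decide]
      exact (hv2 4).mp k4
    · show (q ((5 : Fin 7) + 0)).card = 1
      rw [show ((5 : Fin 7) + 0) = 5 from by decide]
      exact (hv1 5).mp k5
    · show (q ((6 : Fin 7) + 0)).card = 1
      rw [show ((6 : Fin 7) + 0) = 6 from by decide]
      exact (hv1 6).mp k6
  · obtain ⟨k0, k1, k2, k3, k4, k5, k6⟩ := h1
    refine comb78base (fun i => q (i + 1)) ?_ ?_ ?_ ?_ ?_ ?_ ?_ ?_ ?_ ?_
    · intro i; exact hRow (i + 1)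
    · intro i a ha b hb; exact hAdj (i + 1) a ha b (by have hb2 : b ∈ q (i + 1 + 1) := hb; rwa [add_right_comm] at hb2)
    · intro i a ha b hb; exact hTwo (i + 1) a ha b (by have hb2 : b ∈ q (i + 2 + 1) := hb; rwa [add_right_comm] at hb2)
    · show (q ((0 : Fin 7) + 1)).card = 2
      rw [show ((0 : Fin 7) + 1) = 1 from by decide]
      exact (hv2 1).mp k0
    · show (q ((1 : Fin 7) + 1)).card = 1
      rw [show ((1 : Fin 7) + 1) = 2 from by decide]
      exact (hv1 2).mp k1
    · show (q ((2 : Fin 7) + 1)).card = 2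
      rw [show ((2 : Fin 7) + 1) = 3 from by decide]
      exact (hv2 3).mp k2
    · show (q ((3 : Fin 7) + 1)).card = 1
      rw [show ((3 : Fin 7) + 1) = 4 from by decide]
      exact (hv1 4).mp k3
    · show (q ((4 : Fin 7) + 1)).card = 2
      rw [show ((4 : Fin 7) + 1) = 5 from by decide]
      exact (hv2 5).mp k4
    · show (q ((5 : Fin 7) + 1)).card = 1
      rw [show ((5 : Fin 7) + 1) = 6 from by decide]
      exact (hv1 6).mp k5
    · show (q ((6 : Fin 7) + 1)).card = 1
      rw [show ((6 : Fin 7) + 1) = 0 from by decide]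
      exact (hv1 0).mp k6
  · obtain ⟨k0, k1, k2, k3, k4, k5, k6⟩ := h2
    refine comb78base (fun i => q (i + 2)) ?_ ?_ ?_ ?_ ?_ ?_ ?_ ?_ ?_ ?_
    · intro i; exact hRow (i + 2)
    · intro i a ha b hb; exact hAdj (i + 2) a ha b (by have hb2 : b ∈ q (i + 1 + 2) := hb; rwa [add_right_comm] at hb2)
    · intro i a ha b hb; exact hTwo (i + 2) a ha b (by have hb2 : b ∈ q (i + 2 + 2) := hb; rwa [add_right_comm] at hb2)
    · show (q ((0 : Fin 7) + 2)).card = 2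
      rw [show ((0 : Fin 7) + 2) = 2 from by decide]
      exact (hv2 2).mp k0
    · show (q ((1 : Fin 7) + 2)).card = 1
      rw [show ((1 : Fin 7) + 2) = 3 from by decide]
      exact (hv1 3).mp k1
    · show (q ((2 : Fin 7) + 2)).card = 2
      rw [show ((2 : Fin 7) + 2) = 4 from by decide]
      exact (hv2 4).mp k2
    · show (q ((3 : Fin 7) + 2)).card = 1
      rw [show ((3 : Fin 7) + 2) = 5 from by decide]
      exact (hv1 5).mp k3
    · show (q ((4 : Fin 7) + 2)).card = 2
      rw [show ((4 : Fin 7) + 2) = 6 from by decide]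
      exact (hv2 6).mp k4
    · show (q ((5 : Fin 7) + 2)).card = 1
      rw [show ((5 : Fin 7) + 2) = 0 from by decide]
      exact (hv1 0).mp k5
    · show (q ((6 : Fin 7) + 2)).card = 1
      rw [show ((6 : Fin 7) + 2) = 1 from by decide]
      exact (hv1 1).mp k6
  · obtain ⟨k0, k1, k2, k3, k4, k5, k6⟩ := h3
    refine comb78base (fun i => q (i + 3)) ?_ ?_ ?_ ?_ ?_ ?_ ?_ ?_ ?_ ?_
    · intro i; exact hRow (i + 3)
    · intro i a ha b hb; exact hAdj (i + 3) a ha b (by have hb2 : b ∈ q (i + 1 + 3) := hb; rwa [add_right_comm] at hb2)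
    · intro i a ha b hb; exact hTwo (i + 3) a ha b (by have hb2 : b ∈ q (i + 2 + 3) := hb; rwa [add_right_comm] at hb2)
    · show (q ((0 : Fin 7) + 3)).card = 2
      rw [show ((0 : Fin 7) + 3) = 3 from by decide]
      exact (hv2 3).mp k0
    · show (q ((1 : Fin 7) + 3)).card = 1
      rw [show ((1 : Fin 7) + 3) = 4 from by decide]
      exact (hv1 4).mp k1
    · show (q ((2 : Fin 7) + 3)).card = 2
      rw [show ((2 : Fin 7) + 3) = 5 from by decide]
      exact (hv2 5).mp k2
    · show (q ((3 : Fin 7) + 3)).card = 1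
      rw [show ((3 : Fin 7) + 3) = 6 from by decide]
      exact (hv1 6).mp k3
    · show (q ((4 : Fin 7) + 3)).card = 2
      rw [show ((4 : Fin 7) + 3) = 0 from by decide]
      exact (hv2 0).mp k4
    · show (q ((5 : Fin 7) + 3)).card = 1
      rw [show ((5 : Fin 7) + 3) = 1 from by decide]
      exact (hv1 1).mp k5
    · show (q ((6 : Fin 7) + 3)).card = 1
      rw [show ((6 : Fin 7) + 3) = 2 from by decide]
      exact (hv1 2).mp k6
  · obtain ⟨k0, k1, k2, k3, k4, k5, k6⟩ := h4
    refine comb78base (fun i => q (i + 4)) ?_ ?_ ?_ ?_ ?_ ?_ ?_ ?_ ?_ ?_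
    · intro i; exact hRow (i + 4)
    · intro i a ha b hb; exact hAdj (i + 4) a ha b (by have hb2 : b ∈ q (i + 1 + 4) := hb; rwa [add_right_comm] at hb2)
    · intro i a ha b hb; exact hTwo (i + 4) a ha b (by have hb2 : b ∈ q (i + 2 + 4) := hb; rwa [add_right_comm] at hb2)
    · show (q ((0 : Fin 7) + 4)).card = 2
      rw [show ((0 : Fin 7) + 4) = 4 from by decide]
      exact (hv2 4).mp k0
    · show (q ((1 : Fin 7) + 4)).card = 1
      rw [show ((1 : Fin 7) + 4) = 5 from by decide]
      exact (hv1 5).mp k1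
    · show (q ((2 : Fin 7) + 4)).card = 2
      rw [show ((2 : Fin 7) + 4) = 6 from by decide]
      exact (hv2 6).mp k2
    · show (q ((3 : Fin 7) + 4)).card = 1
      rw [show ((3 : Fin 7) + 4) = 0 from by decide]
      exact (hv1 0).mp k3
    · show (q ((4 : Fin 7) + 4)).card = 2
      rw [show ((4 : Fin 7) + 4) = 1 from by decide]
      exact (hv2 1).mp k4
    · show (q ((5 : Fin 7) + 4)).card = 1
      rw [show ((5 : Fin 7) + 4) = 2 from by decide]
      exact (hv1 2).mp k5
    · show (q ((6 : Fin 7) + 4)).card = 1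
      rw [show ((6 : Fin 7) + 4) = 3 from by decide]
      exact (hv1 3).mp k6
  · obtain ⟨k0, k1, k2, k3, k4, k5, k6⟩ := h5
    refine comb78base (fun i => q (i + 5)) ?_ ?_ ?_ ?_ ?_ ?_ ?_ ?_ ?_ ?_
    · intro i; exact hRow (i + 5)
    · intro i a ha b hb; exact hAdj (i + 5) a ha b (by have hb2 : b ∈ q (i + 1 + 5) := hb; rwa [add_right_comm] at hb2)
    · intro i a ha b hb; exact hTwo (i + 5) a ha b (by have hb2 : b ∈ q (i + 2 + 5) := hb; rwa [add_right_comm] at hb2)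
    · show (q ((0 : Fin 7) + 5)).card = 2
      rw [show ((0 : Fin 7) + 5) = 5 from by decide]
      exact (hv2 5).mp k0
    · show (q ((1 : Fin 7) + 5)).card = 1
      rw [show ((1 : Fin 7) + 5) = 6 from by decide]
      exact (hv1 6).mp k1
    · show (q ((2 : Fin 7) + 5)).card = 2
      rw [show ((2 : Fin 7) + 5) = 0 from by decide]
      exact (hv2 0).mp k2
    · show (q ((3 : Fin 7) + 5)).card = 1
      rw [show ((3 : Fin 7) + 5) = 1 from by decide]
      exact (hv1 1).mp k3
    · show (q ((4 : Fin 7) + 5)).card = 2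
      rw [show ((4 : Fin 7) + 5) = 2 from by decide]
      exact (hv2 2).mp k4
    · show (q ((5 : Fin 7) + 5)).card = 1
      rw [show ((5 : Fin 7) + 5) = 3 from by decide]
      exact (hv1 3).mp k5
    · show (q ((6 : Fin 7) + 5)).card = 1
      rw [show ((6 : Fin 7) + 5) = 4 from by decide]
      exact (hv1 4).mp k6
  · obtain ⟨k0, k1, k2, k3, k4, k5, k6⟩ := h6
    refine comb78base (fun i => q (i + 6)) ?_ ?_ ?_ ?_ ?_ ?_ ?_ ?_ ?_ ?_
    · intro i; exact hRow (i + 6)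
    · intro i a ha b hb; exact hAdj (i + 6) a ha b (by have hb2 : b ∈ q (i + 1 + 6) := hb; rwa [add_right_comm] at hb2)
    · intro i a ha b hb; exact hTwo (i + 6) a ha b (by have hb2 : b ∈ q (i + 2 + 6) := hb; rwa [add_right_comm] at hb2)
    · show (q ((0 : Fin 7) + 6)).card = 2
      rw [show ((0 : Fin 7) + 6) = 6 from by decide]
      exact (hv2 6).mp k0
    · show (q ((1 : Fin 7) + 6)).card = 1
      rw [show ((1 : Fin 7) + 6) = 0 from by decide]
      exact (hv1 0).mp k1
    · show (q ((2 : Fin 7) + 6)).card = 2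
      rw [show ((2 : Fin 7) + 6) = 1 from by decide]
      exact (hv2 1).mp k2
    · show (q ((3 : Fin 7) + 6)).card = 1
      rw [show ((3 : Fin 7) + 6) = 2 from by decide]
      exact (hv1 2).mp k3
    · show (q ((4 : Fin 7) + 6)).card = 2
      rw [show ((4 : Fin 7) + 6) = 3 from by decide]
      exact (hv2 3).mp k4
    · show (q ((5 : Fin 7) + 6)).card = 1
      rw [show ((5 : Fin 7) + 6) = 4 from by decide]
      exact (hv1 4).mp k5
    · show (q ((6 : Fin 7) + 6)).card = 1
      rw [show ((6 : Fin 7) + 6) = 5 from by decide]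
      exact (hv1 5).mp k6


lemma core77 (S : Finset (Fin 7 × Fin 7))
    (hS : ∀ u ∈ S, ∀ v ∈ S, ¬ (toroidalGrid 7 7).square.Adj u v) : S.card ≤ 8 := by
  classical
  set q : Fin 7 → Finset (Fin 7) := fun i => (S.filter (fun v => v.1 = i)).image Prod.snd with hq
  have hmem : ∀ (i : Fin 7) (a : Fin 7), a ∈ q i ↔ (i, a) ∈ S := by
    intro i a
    simp only [hq, Finset.mem_image, Finset.mem_filter]
    constructor
    · rintro ⟨⟨x, y⟩, ⟨hx, rfl⟩, rfl⟩; exact hx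
    · intro h; exact ⟨(i,a), ⟨h, rfl⟩, rfl⟩
  have hRow : ∀ i, ∀ a ∈ q i, ∀ b ∈ q i, b ≠ a + 1 ∧ b ≠ a + 2 := by
    intro i a ha b hb
    rw [hmem] at ha hb
    constructor
    · rintro rfl; exact hS _ ha _ hb (brA1_7 i a)
    · rintro rfl; exact hS _ ha _ hb (brA2_7 i a)
  have hAdj : ∀ i, ∀ a ∈ q i, ∀ b ∈ q (i+1), cr1 a b := by
    intro i a ha b hb
    rw [hmem] at ha hb
    refine ⟨?_, ?_, ?_⟩
    · rintro rfl; exact hS _ ha _ hb (brA3_7 i b)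
    · rintro rfl; exact hS _ ha _ hb (brA5_7 i a)
    · rintro rfl; exact hS _ ha _ hb (brA6_7 i b)
  have hTwo : ∀ i, ∀ a ∈ q i, ∀ b ∈ q (i+2), b ≠ a := by
    intro i a ha b hb
    rw [hmem] at ha hb
    rintro rfl; exact hS _ ha _ hb (brA4_7 i b)
  have hcard : S.card = ∑ i, (q i).card := by
    rw [Finset.card_eq_sum_card_fiberwise (f := Prod.fst) (t := Finset.univ)
      (fun x _ => Finset.mem_univ _)]
    refine Finset.sum_congr rfl ?_
    intro i _
    rw [hq]
    refine (Finset.card_image_of_injOn ?_).symm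
    intro u hu v hv h
    exact Prod.ext (by rw [(Finset.mem_filter.mp hu).2, (Finset.mem_filter.mp hv).2]) h
  rw [hcard]
  exact comb77 q hRow hAdj hTwo

lemma core78 (S : Finset (Fin 7 × Fin 8))
    (hS : ∀ u ∈ S, ∀ v ∈ S, ¬ (toroidalGrid 7 8).square.Adj u v) : S.card ≤ 9 := by
  classical
  set q : Fin 7 → Finset (Fin 8) := fun i => (S.filter (fun v => v.1 = i)).image Prod.snd with hq
  have hmem : ∀ (i : Fin 7) (a : Fin 8), a ∈ q i ↔ (i, a) ∈ S := by
    intro i a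
    simp only [hq, Finset.mem_image, Finset.mem_filter]
    constructor
    · rintro ⟨⟨x, y⟩, ⟨hx, rfl⟩, rfl⟩; exact hx
    · intro h; exact ⟨(i,a), ⟨h, rfl⟩, rfl⟩
  have hRow : ∀ i, ∀ a ∈ q i, ∀ b ∈ q i, b ≠ a + 1 ∧ b ≠ a + 2 := by
    intro i a ha b hb
    rw [hmem] at ha hb
    constructor
    · rintro rfl; exact hS _ ha _ hb (brA1_8 i a)
    · rintro rfl; exact hS _ ha _ hb (brA2_8 i a)
  have hAdj : ∀ i, ∀ a ∈ q i, ∀ b ∈ q (i+1), cr1 a b := by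
    intro i a ha b hb
    rw [hmem] at ha hb
    refine ⟨?_, ?_, ?_⟩
    · rintro rfl; exact hS _ ha _ hb (brA3_8 i b)
    · rintro rfl; exact hS _ ha _ hb (brA5_8 i a)
    · rintro rfl; exact hS _ ha _ hb (brA6_8 i b)
  have hTwo : ∀ i, ∀ a ∈ q i, ∀ b ∈ q (i+2), b ≠ a := by
    intro i a ha b hb
    rw [hmem] at ha hb
    rintro rfl; exact hS _ ha _ hb (brA4_8 i b)
  have hcard : S.card = ∑ i, (q i).card := by
    rw [Finset.card_eq_sum_card_fiberwise (f := Prod.fst) (t := Finset.univ)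
      (fun x _ => Finset.mem_univ _)]
    refine Finset.sum_congr rfl ?_
    intro i _
    rw [hq]
    refine (Finset.card_image_of_injOn ?_).symm
    intro u hu v hv h
    exact Prod.ext (by rw [(Finset.mem_filter.mp hu).2, (Finset.mem_filter.mp hv).2]) h
  rw [hcard]
  exact comb78 q hRow hAdj hTwo

def col77 : Fin 7 × Fin 7 → Fin 7 := fun v => v.1 + 3 * v.2

set_option maxRecDepth 100000 in
theorem col77valid : ∀ u v : Fin 7 × Fin 7, col77 u = col77 v →
    ¬ (toroidalGrid 7 7).square.Adj u v := by decide

def tbl78 : List (Fin 7) :=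
  [0,1,2,0,1,2,3,4, 2,3,4,5,3,0,1,5, 1,0,6,1,2,4,6,3, 4,2,3,0,5,1,2,0,
   5,1,4,2,6,0,3,6, 3,0,6,1,3,4,5,1, 6,5,3,4,5,6,0,2]

def col78 : Fin 7 × Fin 8 → Fin 7 := fun v => tbl78.getD (8 * v.1.val + v.2.val) 0

set_option maxRecDepth 100000 in
theorem col78valid : ∀ u v : Fin 7 × Fin 8, col78 u = col78 v →
    ¬ (toroidalGrid 7 8).square.Adj u v := by decide

theorem stmt18 :
    (toroidalGrid 7 7).square.chromaticNumber = 7 ∧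
    (toroidalGrid 7 8).square.chromaticNumber = 7 := by
  constructor
  · apply le_antisymm
    · have C : (toroidalGrid 7 7).square.Coloring (Fin 7) :=
        SimpleGraph.Coloring.mk col77 (fun {u v} hadj heq => col77valid u v heq hadj)
      have h := C.colorable.chromaticNumber_le
      simpa using h
    · have h6 : ¬ (toroidalGrid 7 7).square.Colorable 6 := by
        rintro ⟨C⟩
        obtain ⟨k, hk⟩ := Fintype.exists_lt_card_fiber_of_mul_lt_card C
          (by simp : Fintype.card (Fin 6) * 8 < Fintype.card (Fin 7 × Fin 7))
        have hind : ∀ u ∈ (Finset.univ.filter fun x => C x = k),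
            ∀ v ∈ (Finset.univ.filter fun x => C x = k),
            ¬ (toroidalGrid 7 7).square.Adj u v := by
          intro u hu v hv hadj
          exact C.valid hadj (by
            rw [(Finset.mem_filter.mp hu).2, (Finset.mem_filter.mp hv).2])
        have := core77 _ hind
        omega
      have h7 : ¬ ((toroidalGrid 7 7).square.chromaticNumber ≤ 6) := fun hle =>
        h6 (SimpleGraph.chromaticNumber_le_iff_colorable.mp (by exact_mod_cast hle))
      calc (7 : ℕ∞) = 6 + 1 := by norm_num
        _ ≤ _ := Order.add_one_le_of_lt (not_le.mp h7)
  · apply le_antisymm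
    · have C : (toroidalGrid 7 8).square.Coloring (Fin 7) :=
        SimpleGraph.Coloring.mk col78 (fun {u v} hadj heq => col78valid u v heq hadj)
      have h := C.colorable.chromaticNumber_le
      simpa using h
    · have h6 : ¬ (toroidalGrid 7 8).square.Colorable 6 := by
        rintro ⟨C⟩
        obtain ⟨k, hk⟩ := Fintype.exists_lt_card_fiber_of_mul_lt_card C
          (by simp : Fintype.card (Fin 6) * 9 < Fintype.card (Fin 7 × Fin 8))
        have hind : ∀ u ∈ (Finset.univ.filter fun x => C x = k),
            ∀ v ∈ (Finset.univ.filter fun x => C x = k),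
            ¬ (toroidalGrid 7 8).square.Adj u v := by
          intro u hu v hv hadj
          exact C.valid hadj (by
            rw [(Finset.mem_filter.mp hu).2, (Finset.mem_filter.mp hv).2])
        have := core78 _ hind
        omega
      have h7 : ¬ ((toroidalGrid 7 8).square.chromaticNumber ≤ 6) := fun hle =>
        h6 (SimpleGraph.chromaticNumber_le_iff_colorable.mp (by exact_mod_cast hle))
      calc (7 : ℕ∞) = 6 + 1 := by norm_num
        _ ≤ _ := Order.add_one_le_of_lt (not_le.mp h7)
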